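/- Let r ≥ 1 and let S be a 2^r-divisible set of exactly 2^{r+1} points in PG(v-1,2). Then S is the point set of an affine (r+1)-space, i.e., there is an (r+2)-dimensional subspace U of F_2^v and a hyperplane of U such that S consists of the 2^{r+1} vectors of U outside that hyperplane. In particular, S contains no line. -/

import Mathlib

open Classical Module

open Finset

namespace AffineAux

variable {v : ℕ}

def dp (c : Fin v → ZMod 2) : (Fin v → ZMod 2) →ₗ[ZMod 2] ZMod 2 where
  toFun x := ∑ i, c i * x i
  map_add' x y := by simp [mul_add, Finset.sum_add_distrib]
  map_smul' m x := by simp [Finset.mul_sum, mul_left_comm]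

lemma dp_apply (c x : Fin v → ZMod 2) : dp c x = ∑ i, c i * x i := rfl

lemma dp_add_left (c c' x : Fin v → ZMod 2) : dp (c + c') x = dp c x + dp c' x := by
  simp [dp_apply, add_mul, Finset.sum_add_distrib]

lemma dp_single (j : Fin v) (x : Fin v → ZMod 2) : dp (Pi.single j 1) x = x j := by
  simp [dp_apply, Pi.single_apply, ite_mul]

lemma dp_zero_left (x : Fin v → ZMod 2) : dp 0 x = 0 := by simp [dp_apply]

lemma dp_ne_zero {c : Fin v → ZMod 2} (hc : c ≠ 0) : dp c ≠ (0 : _ →ₗ[ZMod 2] ZMod 2) := by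
  obtain ⟨j, hj⟩ := Function.ne_iff.mp hc
  intro h
  have : dp c (Pi.single j 1) = 0 := by rw [h]; rfl
  rw [dp_apply] at this
  simp [Pi.single_apply, mul_ite] at this
  exact hj (by simpa using this)

lemma zmod2_ne (a : ZMod 2) : a ≠ 0 ↔ a = 1 := by revert a; decide

lemma exists_dp_one {x : Fin v → ZMod 2} (hx : x ≠ 0) : ∃ c, dp c x = 1 := by
  obtain ⟨j, hj⟩ := Function.ne_iff.mp hx
  exact ⟨Pi.single j 1, by rw [dp_single]; exact (zmod2_ne _).mp (by simpa using hj)⟩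

lemma exists_dp_sep {x y : Fin v → ZMod 2} (hx : x ≠ 0) (hxy : x ≠ y) :
    ∃ c, dp c x = 1 ∧ dp c y = 0 := by
  obtain ⟨j, hj⟩ := Function.ne_iff.mp hxy
  have hc : ∀ a b : ZMod 2, a ≠ b → (a = 1 ∧ b = 0) ∨ (a = 0 ∧ b = 1) := by decide
  rcases hc _ _ hj with ⟨h1, h2⟩ | ⟨h1, h2⟩
  · exact ⟨Pi.single j 1, by rw [dp_single, dp_single, h1, h2]; exact ⟨rfl, rfl⟩⟩
  · obtain ⟨k, hk⟩ := Function.ne_iff.mp hx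
    have hxk : x k = 1 := (zmod2_ne _).mp (by simpa using hk)
    rcases (by decide : ∀ a : ZMod 2, a = 0 ∨ a = 1) (y k) with h3 | h3
    · exact ⟨Pi.single k 1, by rw [dp_single, dp_single, hxk, h3]; exact ⟨rfl, rfl⟩⟩
    · refine ⟨Pi.single k 1 + Pi.single j 1, ?_, ?_⟩
      · rw [dp_add_left, dp_single, dp_single, hxk, h1]; rfl
      · rw [dp_add_left, dp_single, dp_single, h3, h2]; rfl

lemma fun_add_self (c : Fin v → ZMod 2) : c + c = 0 := by
  have h : ∀ a : ZMod 2, a + a = 0 := by decide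
  funext i; exact h (c i)

lemma card_dp_one {x : Fin v → ZMod 2} (hx : x ≠ 0) :
    2 * (univ.filter fun c : Fin v → ZMod 2 => dp c x ≠ 0).card = 2 ^ v := by
  obtain ⟨c₁, hc₁⟩ := exists_dp_one hx
  have key : (univ.filter fun c : Fin v → ZMod 2 => dp c x ≠ 0).card
      = (univ.filter fun c : Fin v → ZMod 2 => ¬ dp c x ≠ 0).card := by
    refine Finset.card_bij' (fun c _ => c + c₁) (fun c _ => c + c₁) ?_ ?_ ?_ ?_
    · intro c hc
      simp only [mem_filter, mem_univ, true_and] at hc ⊢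
      rw [dp_add_left, (zmod2_ne _).mp hc, hc₁]
      decide
    · intro c hc
      simp only [mem_filter, mem_univ, true_and, not_not] at hc ⊢
      rw [dp_add_left, hc, hc₁]
      decide
    · intro c _; show _ + _ + _ = c; rw [add_assoc, fun_add_self, add_zero]
    · intro c _; show _ + _ + _ = c; rw [add_assoc, fun_add_self, add_zero]
  have total := Finset.card_filter_add_card_filter_not
    (s := (univ : Finset (Fin v → ZMod 2))) (p := fun c => dp c x ≠ 0)
  rw [Finset.card_univ] at total
  simp only [Fintype.card_fun, ZMod.card, Fintype.card_fin] at total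
  omega

lemma card_dp_pair {x y : Fin v → ZMod 2} (hx : x ≠ 0) (hxy : x ≠ y) :
    2 * (univ.filter fun c : Fin v → ZMod 2 => dp c y ≠ 0 ∧ dp c x ≠ 0).card
      = (univ.filter fun c : Fin v → ZMod 2 => dp c y ≠ 0).card := by
  obtain ⟨c₂, h1, h2⟩ := exists_dp_sep hx hxy
  have key : (univ.filter fun c : Fin v → ZMod 2 => dp c y ≠ 0 ∧ dp c x ≠ 0).card
      = (univ.filter fun c : Fin v → ZMod 2 => dp c y ≠ 0 ∧ ¬ dp c x ≠ 0).card := by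
    refine Finset.card_bij' (fun c _ => c + c₂) (fun c _ => c + c₂) ?_ ?_ ?_ ?_
    · intro c hc
      simp only [mem_filter, mem_univ, true_and] at hc ⊢
      rw [dp_add_left, dp_add_left, (zmod2_ne _).mp hc.2, h1, (zmod2_ne _).mp hc.1, h2]
      refine ⟨by decide, by decide⟩
    · intro c hc
      simp only [mem_filter, mem_univ, true_and, not_not] at hc ⊢
      rw [dp_add_left, dp_add_left, hc.2, h1, (zmod2_ne _).mp hc.1, h2]
      refine ⟨by decide, by decide⟩
    · intro c _; show _ + _ + _ = c; rw [add_assoc, fun_add_self, add_zero]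
    · intro c _; show _ + _ + _ = c; rw [add_assoc, fun_add_self, add_zero]
  have total : ((univ.filter fun c : Fin v → ZMod 2 => dp c y ≠ 0).filter
        (fun c => dp c x ≠ 0)).card
      + ((univ.filter fun c : Fin v → ZMod 2 => dp c y ≠ 0).filter
        (fun c => ¬ dp c x ≠ 0)).card
      = (univ.filter fun c : Fin v → ZMod 2 => dp c y ≠ 0).card :=
    Finset.card_filter_add_card_filter_not _
  rw [Finset.filter_filter, Finset.filter_filter] at total
  omega

end AffineAux

open AffineAux

set_option maxHeartbeats 1000000 in
set_option synthInstance.maxHeartbeats 400000 in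
set_option maxHeartbeats 1000000 in
set_option synthInstance.maxHeartbeats 400000 in
/-- Every 2^r-divisible set of exactly 2^(r+1) points in PG(v-1,2) is the point
set of an affine (r+1)-space; in particular it contains no line. -/
theorem divisible_card_pow_is_affine_space (v r : ℕ) (hr : 1 ≤ r)
    (S : Finset (Fin v → ZMod 2)) (h0 : ∀ x ∈ S, x ≠ 0)
    (hdiv : ∀ φ : (Fin v → ZMod 2) →ₗ[ZMod 2] ZMod 2, φ ≠ 0 →
      2 ^ r ∣ (S.filter (fun x => φ x ≠ 0)).card)
    (hcard : S.card = 2 ^ (r + 1)) :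
    (∃ U H : Submodule (ZMod 2) (Fin v → ZMod 2), H ≤ U ∧
      finrank (ZMod 2) ↥U = r + 2 ∧ finrank (ZMod 2) ↥H = r + 1 ∧
      (S : Set (Fin v → ZMod 2)) = {x | x ∈ U ∧ x ∉ H}) ∧
    (∀ a ∈ S, ∀ b ∈ S, a ≠ b → a + b ∉ S) := by
  classical
  have h2r : 0 < 2 ^ r := pow_pos (by norm_num) r
  have hSne : S.Nonempty := Finset.card_pos.mp (by rw [hcard]; positivity)
  set n : (Fin v → ZMod 2) → ℕ := fun c => (S.filter fun x => dp c x ≠ 0).card with hn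
  have hdiv' : ∀ c : Fin v → ZMod 2, c ≠ 0 → 2 ^ r ∣ n c :=
    fun c hc => hdiv (dp c) (dp_ne_zero hc)
  set A : Finset (Fin v → ZMod 2) := univ.filter (fun c => ∀ x ∈ S, dp c x = 0) with hA
  set B : Finset (Fin v → ZMod 2) := univ.filter (fun c => ∀ x ∈ S, dp c x = 1) with hB
  have memA : ∀ c, c ∈ A ↔ ∀ x ∈ S, dp c x = 0 := by intro c; simp [hA]
  have memB : ∀ c, c ∈ B ↔ ∀ x ∈ S, dp c x = 1 := by intro c; simp [hB]
  have nA : ∀ c ∈ A, n c = 0 := by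
    intro c hc
    rw [hn]
    simp only [Finset.card_eq_zero, Finset.filter_eq_empty_iff]
    intro x hx
    simp [(memA c).mp hc x hx]
  have nB : ∀ c ∈ B, n c = 2 ^ (r + 1) := by
    intro c hc
    have hfull : S.filter (fun x => dp c x ≠ 0) = S := by
      rw [Finset.filter_eq_self]
      intro x hx
      rw [(memB c).mp hc x hx]
      decide
    show (S.filter (fun x => dp c x ≠ 0)).card = 2 ^ (r + 1)
    rw [hfull, hcard]
  have hAB : ∀ c, c ∈ A → c ∈ B → False := by
    intro c hcA hcB
    obtain ⟨x, hx⟩ := hSne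
    have h1 := (memA c).mp hcA x hx
    have h2 := (memB c).mp hcB x hx
    rw [h1] at h2
    exact absurd h2 (by decide)
  have nRest : ∀ c, c ∉ A → c ∉ B → n c = 2 ^ r := by
    intro c hcA hcB
    have hc0 : c ≠ 0 := by
      rintro rfl
      exact hcA ((memA 0).mpr (fun x _ => dp_zero_left x))
    obtain ⟨m, hm⟩ := hdiv' c hc0
    have hpos : 0 < n c := by
      rw [memA] at hcA
      push_neg at hcA
      obtain ⟨x, hxS, hx⟩ := hcA
      exact Finset.card_pos.mpr ⟨x, Finset.mem_filter.mpr ⟨hxS, hx⟩⟩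
    have hle : n c ≤ 2 ^ (r + 1) := by
      rw [hn, ← hcard]; exact Finset.card_filter_le _ _
    have hne : n c ≠ 2 ^ (r + 1) := by
      intro h
      apply hcB
      rw [memB]
      intro x hxS
      have hfull : S.filter (fun x => dp c x ≠ 0) = S := by
        apply Finset.eq_of_subset_of_card_le (Finset.filter_subset _ _)
        rw [hcard, ← h]
      have : x ∈ S.filter (fun x => dp c x ≠ 0) := hfull.symm ▸ hxS
      exact (zmod2_ne _).mp (Finset.mem_filter.mp this).2
    have hpow : 2 ^ (r + 1) = 2 ^ r * 2 := by rw [pow_succ]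
    rw [hm] at hpos hle hne
    rw [hpow] at hle hne
    have hmle : m ≤ 2 := Nat.le_of_mul_le_mul_left hle h2r
    have hm0 : m ≠ 0 := by
      rintro rfl
      rw [Nat.mul_zero] at hpos
      exact absurd hpos (lt_irrefl 0)
    have hm2 : m ≠ 2 := by rintro rfl; exact hne rfl
    have hm1 : m = 1 := by omega
    rw [hm, hm1, mul_one]
  -- first moment
  have swap1 : ∑ c : Fin v → ZMod 2, n c
      = ∑ x ∈ S, (univ.filter fun c : Fin v → ZMod 2 => dp c x ≠ 0).card := by
    simp only [hn, Finset.card_filter]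
    rw [Finset.sum_comm]
  have moment1 : 2 * ∑ c : Fin v → ZMod 2, n c = 2 ^ (r + 1) * 2 ^ v := by
    rw [swap1, Finset.mul_sum]
    rw [Finset.sum_congr rfl (fun x hx => card_dp_one (h0 x hx))]
    rw [Finset.sum_const, hcard, smul_eq_mul]
  have sumn : ∑ c : Fin v → ZMod 2, n c = 2 ^ r * 2 ^ v := by
    have : 2 ^ (r + 1) * 2 ^ v = 2 * (2 ^ r * 2 ^ v) := by ring
    omega
  -- split sum
  have filtA : univ.filter (fun c : Fin v → ZMod 2 => c ∈ A) = A := by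
    ext c; simp
  have filtB : univ.filter (fun c : Fin v → ZMod 2 => c ∈ B) = B := by
    ext c; simp
  have split : (∑ c : Fin v → ZMod 2, n c) + 2 ^ r * A.card
      = 2 ^ r * 2 ^ v + 2 ^ r * B.card := by
    have lhs : (∑ c : Fin v → ZMod 2, n c) + 2 ^ r * A.card
        = ∑ c : Fin v → ZMod 2, (n c + if c ∈ A then 2 ^ r else 0) := by
      rw [Finset.sum_add_distrib, ← Finset.sum_filter, filtA, Finset.sum_const, smul_eq_mul,
        mul_comm]
    have rhs : 2 ^ r * 2 ^ v + 2 ^ r * B.card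
        = ∑ c : Fin v → ZMod 2, (2 ^ r + if c ∈ B then 2 ^ r else 0) := by
      rw [Finset.sum_add_distrib, ← Finset.sum_filter, filtB, Finset.sum_const, smul_eq_mul,
        Finset.sum_const, Finset.card_univ, smul_eq_mul, mul_comm B.card _]
      congr 1
      simp [Fintype.card_fun]
      ring
    rw [lhs, rhs]
    apply Finset.sum_congr rfl
    intro c _
    by_cases hcA : c ∈ A
    · have hcB : c ∉ B := fun h => hAB c hcA h
      simp [hcA, hcB, nA c hcA]
    · by_cases hcB : c ∈ B
      · simp [hcA, hcB, nB c hcB, pow_succ]; ring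
      · simp [hcA, hcB, nRest c hcA hcB]
  have hABcard : A.card = B.card := by
    rw [sumn] at split
    have := Nat.add_left_cancel split
    exact Nat.eq_of_mul_eq_mul_left h2r this
  have hBne : B.Nonempty := by
    rw [← Finset.card_pos, ← hABcard, Finset.card_pos]
    exact ⟨0, (memA 0).mpr (fun x _ => dp_zero_left x)⟩
  obtain ⟨ψ, hψB⟩ := hBne
  have hψ : ∀ x ∈ S, dp ψ x = 1 := (memB ψ).mp hψB
  -- key claim
  have key : ∀ x₀, x₀ ∈ Submodule.span (ZMod 2) (S : Set (Fin v → ZMod 2)) →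
      dp ψ x₀ ≠ 0 → x₀ ∈ S := by
    intro x₀ hspan hψx₀
    by_contra hx₀S
    have hx₀0 : x₀ ≠ 0 := by
      rintro rfl
      exact hψx₀ (map_zero _)
    set P : Finset (Fin v → ZMod 2) := univ.filter (fun c => dp c x₀ ≠ 0) with hP
    have hA0 : ∀ c, (∀ x ∈ S, dp c x = 0) → dp c x₀ = 0 := by
      intro c hc
      have hle : Submodule.span (ZMod 2) (S : Set (Fin v → ZMod 2))
          ≤ LinearMap.ker (dp c) :=
        Submodule.span_le.mpr (fun x hx => LinearMap.mem_ker.mpr (hc x hx))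
      exact LinearMap.mem_ker.mp (hle hspan)
    have hBP : ∀ c ∈ B, dp c x₀ ≠ 0 := by
      intro c hcB
      have hsum : dp (c + ψ) x₀ = 0 := by
        apply hA0
        intro x hx
        rw [dp_add_left, (memB c).mp hcB x hx, hψ x hx]
        decide
      rw [dp_add_left] at hsum
      have heq : ∀ a b : ZMod 2, a + b = 0 → a = b := by decide
      rw [heq _ _ hsum]
      exact hψx₀
    -- count over P
    have swap2 : ∑ c ∈ P, n c
        = ∑ x ∈ S, (univ.filter fun c : Fin v → ZMod 2
            => dp c x₀ ≠ 0 ∧ dp c x ≠ 0).card := by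
      simp only [hn, Finset.card_filter]
      rw [Finset.sum_comm]
      apply Finset.sum_congr rfl
      intro x _
      rw [hP, Finset.sum_filter]
      exact Finset.sum_congr rfl fun c _ => by
        by_cases h1 : dp c x₀ ≠ 0 <;> by_cases h2 : dp c x ≠ 0 <;> simp [h1, h2]
    have count : 4 * ∑ c ∈ P, n c = 2 ^ (r + 1) * 2 ^ v := by
      have e1 : 2 * ∑ c ∈ P, n c = ∑ x ∈ S, P.card := by
        rw [swap2, Finset.mul_sum]
        apply Finset.sum_congr rfl
        intro x hx
        have hxne : x ≠ x₀ := fun h => hx₀S (h ▸ hx)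
        exact card_dp_pair (h0 x hx) hxne
      have e2 : 2 * P.card = 2 ^ v := card_dp_one hx₀0
      rw [Finset.sum_const, hcard, smul_eq_mul] at e1
      calc 4 * ∑ c ∈ P, n c = 2 * (2 * ∑ c ∈ P, n c) := by ring
        _ = 2 ^ (r + 1) * (2 * P.card) := by rw [e1]; ring
        _ = 2 ^ (r + 1) * 2 ^ v := by rw [e2]
    have PB : P.filter (fun c => c ∈ B) = B := by
      ext c
      simp only [Finset.mem_filter, hP, Finset.mem_univ, true_and]
      constructor
      · exact fun h => h.2
      · exact fun h => ⟨hBP c h, h⟩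
    have lower : 2 ^ r * P.card + 2 ^ r * B.card ≤ ∑ c ∈ P, n c := by
      have e3 : 2 ^ r * P.card + 2 ^ r * B.card
          = ∑ c ∈ P, (2 ^ r + if c ∈ B then 2 ^ r else 0) := by
        rw [Finset.sum_add_distrib, ← Finset.sum_filter, PB, Finset.sum_const,
          Finset.sum_const, smul_eq_mul, smul_eq_mul, mul_comm P.card, mul_comm B.card]
      rw [e3]
      apply Finset.sum_le_sum
      intro c hc
      have hcP : dp c x₀ ≠ 0 := (Finset.mem_filter.mp hc).2
      have hcA : c ∉ A := by
        intro h
        exact hcP (hA0 c ((memA c).mp h))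
      by_cases hcB : c ∈ B
      · simp only [hcB, if_pos]
        rw [nB c hcB, pow_succ]
        omega
      · simp only [hcB, if_neg, not_false_iff]
        rw [nRest c hcA hcB]
        omega
    have hB1 : 1 ≤ B.card := Finset.card_pos.mpr ⟨ψ, hψB⟩
    have e2 : 2 * P.card = 2 ^ v := card_dp_one hx₀0
    have hpow : 2 ^ (r + 1) = 2 * 2 ^ r := by rw [pow_succ]; ring
    nlinarith [h2r, lower, count, e2, hB1]
  -- assemble
  set U : Submodule (ZMod 2) (Fin v → ZMod 2) :=
    Submodule.span (ZMod 2) (S : Set (Fin v → ZMod 2)) with hU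
  set Hs : Submodule (ZMod 2) (Fin v → ZMod 2) := LinearMap.ker (dp ψ) ⊓ U with hHs
  have hHU : Hs ≤ U := inf_le_right
  have hSset : (S : Set (Fin v → ZMod 2)) = {x | x ∈ U ∧ x ∉ Hs} := by
    ext x
    simp only [Finset.mem_coe, Set.mem_setOf_eq]
    constructor
    · intro hxS
      refine ⟨Submodule.subset_span hxS, ?_⟩
      intro hxH
      have h1 := hψ x hxS
      have h2 : dp ψ x = 0 := LinearMap.mem_ker.mp hxH.1
      rw [h1] at h2
      exact absurd h2 (by decide)
    · rintro ⟨hxU, hxH⟩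
      refine key x hxU ?_
      intro h
      exact hxH ⟨LinearMap.mem_ker.mpr h, hxU⟩
  have noline : ∀ a ∈ S, ∀ b ∈ S, a ≠ b → a + b ∉ S := by
    intro a ha b hb hab hmem
    have h1 := hψ a ha
    have h2 := hψ b hb
    have h3 := hψ _ hmem
    rw [map_add, h1, h2] at h3
    exact absurd h3 (by decide)
  -- dimensions
  have hfin : FiniteDimensional (ZMod 2) (Fin v → ZMod 2) := by infer_instance
  set g : U →ₗ[ZMod 2] ZMod 2 := (dp ψ).domRestrict U with hg
  obtain ⟨x₁, hx₁⟩ := hSne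
  have hx₁U : x₁ ∈ U := Submodule.subset_span hx₁
  have hrange : LinearMap.range g = ⊤ := by
    rw [LinearMap.range_eq_top]
    intro y
    rcases (by decide : ∀ a : ZMod 2, a = 0 ∨ a = 1) y with h | h
    · exact ⟨0, by simp [h]⟩
    · exact ⟨⟨x₁, hx₁U⟩, by rw [h, hg, LinearMap.domRestrict_apply]; exact hψ x₁ hx₁⟩
  have hker : LinearMap.ker g = Hs.comap U.subtype := by
    ext u
    simp only [LinearMap.mem_ker, hg, LinearMap.domRestrict_apply, Submodule.mem_comap,
      hHs, Submodule.mem_inf, Submodule.coe_subtype]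
    constructor
    · exact fun h => ⟨LinearMap.mem_ker.mpr h, u.2⟩
    · exact fun h => LinearMap.mem_ker.mp h.1
  have rn := g.finrank_range_add_finrank_ker
  rw [hrange, finrank_top, finrank_self, hker,
    (Submodule.comapSubtypeEquivOfLe hHU).finrank_eq] at rn
  -- rn : 1 + finrank Hs = finrank U
  have hcardU : Nat.card ↥U = 2 ^ finrank (ZMod 2) ↥U := by
    rw [Nat.card_eq_fintype_card]
    rw [Module.card_eq_pow_finrank (K := ZMod 2) (V := ↥U), ZMod.card]
  have hcardH : Nat.card ↥Hs = 2 ^ finrank (ZMod 2) ↥Hs := by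
    rw [Nat.card_eq_fintype_card]
    rw [Module.card_eq_pow_finrank (K := ZMod 2) (V := ↥Hs), ZMod.card]
  have hdiffset : {x | x ∈ U ∧ x ∉ Hs} = (U : Set (Fin v → ZMod 2)) \ (Hs : Set _) := by
    ext x; simp [Set.mem_diff, SetLike.mem_coe]
  have hsplitcard : ((U : Set (Fin v → ZMod 2)) \ (Hs : Set _)).ncard
      + (Hs : Set (Fin v → ZMod 2)).ncard = (U : Set (Fin v → ZMod 2)).ncard :=
    Set.ncard_diff_add_ncard_of_subset hHU (Set.toFinite _)
  have hdiffcard : ((U : Set (Fin v → ZMod 2)) \ (Hs : Set _)).ncard = 2 ^ (r + 1) := by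
    rw [← hdiffset, ← hSset, Set.ncard_coe_finset, hcard]
  have hUncard : (U : Set (Fin v → ZMod 2)).ncard = Nat.card ↥U := by
    rw [Set.ncard_eq_toFinset_card']
    rw [Nat.card_eq_fintype_card]
    exact (Set.toFinset_card _).trans (by congr 1)
  have hHncard : (Hs : Set (Fin v → ZMod 2)).ncard = Nat.card ↥Hs := by
    rw [Set.ncard_eq_toFinset_card']
    rw [Nat.card_eq_fintype_card]
    exact (Set.toFinset_card _).trans (by congr 1)
  rw [hdiffcard, hUncard, hHncard, hcardU, hcardH, ← rn] at hsplitcard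
  -- hsplitcard : 2^(r+1) + 2^fH = 2^(1 + fH)
  have hfH : finrank (ZMod 2) ↥Hs = r + 1 := by
    have hp : 2 ^ (1 + finrank (ZMod 2) ↥Hs) = 2 * 2 ^ finrank (ZMod 2) ↥Hs := by
      rw [pow_add]; ring
    have : 2 ^ (r + 1) = 2 ^ finrank (ZMod 2) ↥Hs := by omega
    exact (Nat.pow_right_injective (le_refl 2) this).symm
  have hfU : finrank (ZMod 2) ↥U = r + 2 := by omega
  exact ⟨⟨U, Hs, hHU, hfU, hfH, hSset⟩, noline⟩
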